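/- Let Φ1 be a state, let M be a valid move for Φ1 of type 1, 2 or 3 which is not of the form T3^{ik} (i.e., if M is a type 3 move, its second index differs from k), and suppose the type 2 move T2^k is invalid for M(Φ1). Then, after swapping the two moves, it is not possible that both are invalid: either T2^k is valid for Φ1, or M is valid for T2^k(Φ1). -/
import Mathlib


namespace CPaper


/-- The six types of moves on states (all indices 0-based). -/
inductive Move where
  | t1 (d : ℕ)
  | t2 (i : ℕ)
  | t3 (i j : ℕ)
  | t4 (i j : ℕ)
  | t5 (i j : ℕ)
  | t6 (i j : ℕ)

/-- A state is a list of tuples of integers. -/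
abbrev State := List (List ℤ)

/-- A genuine state: at least one tuple, and all tuples nonempty. -/
def IsState (Φ : State) : Prop := Φ ≠ [] ∧ ∀ t ∈ Φ, t ≠ []

/-- The entries of a state, read in order (flattened). -/
def entries (Φ : State) : List ℤ := Φ.flatten

/-- The number of positions of a state. -/
def numPos (Φ : State) : ℕ := (entries Φ).length

/-- The value at the (0-based) position `i` of the state `Φ`. -/
def entry (Φ : State) (i : ℕ) : ℤ := (entries Φ).getD i 0

/-- The (0-based) index of the tuple containing the flat position `i`. -/
def tupleIdx : State → ℕ → ℕ
  | [], _ => 0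
  | t :: ts, i => if i < t.length then 0 else tupleIdx ts (i - t.length) + 1

/-- Positions `i` and `j` lie in the same tuple of `Φ`. -/
def SameTuple (Φ : State) (i j : ℕ) : Prop := tupleIdx Φ i = tupleIdx Φ j

/-- Position `i` is dominant in `Φ`: its value bounds the absolute value of
every entry of the tuple containing it. -/
def DominantAt (Φ : State) (i : ℕ) : Prop :=
  ∀ k, k < numPos Φ → SameTuple Φ i k → |entry Φ k| ≤ entry Φ i

/-- Apply `f` at flat position `i`, preserving the tuple structure. -/
def modifyFlat (f : ℤ → ℤ) : ℕ → State → State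
  | _, [] => []
  | i, t :: ts =>
    if i < t.length then (t.take i ++ f (t.getD i 0) :: t.drop (i + 1)) :: ts
    else t :: modifyFlat f (i - t.length) ts

/-- Concatenate the `d`-th and `(d+1)`-th tuples of `Φ` (0-based). -/
def joinAt (Φ : State) (d : ℕ) : State :=
  Φ.take d ++ (Φ.getD d [] ++ Φ.getD (d + 1) []) :: Φ.drop (d + 2)

/-- The action of a move on a state. -/
def Move.apply : Move → State → State
  | .t1 d, Φ => joinAt Φ d
  | .t2 i, Φ => modifyFlat (· + 1) i Φ
  | .t3 i j, Φ => modifyFlat (· - 1) j (modifyFlat (· + 1) i Φ)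
  | .t4 i j, Φ => modifyFlat (· - 1) j (modifyFlat (· + 1) i Φ)
  | .t5 i j, Φ => modifyFlat (· + 1) j (modifyFlat (· + 1) i Φ)
  | .t6 i j, Φ => modifyFlat (· + 1) j (modifyFlat (· + 1) i Φ)

/-- A move is admissible for `Φ` when its indices are within bounds. -/
def Move.Admissible : Move → State → Prop
  | .t1 d, Φ => d + 1 < Φ.length
  | .t2 i, Φ => i < numPos Φ
  | .t3 i j, Φ => i < numPos Φ ∧ j < numPos Φ ∧ i ≠ j
  | .t4 i j, Φ => i < numPos Φ ∧ j < numPos Φ ∧ i ≠ j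
  | .t5 i j, Φ => i < numPos Φ ∧ j < numPos Φ ∧ i ≠ j
  | .t6 i j, Φ => i < numPos Φ ∧ j < numPos Φ ∧ i ≠ j

/-- Validity of a move for a state. -/
def Move.Valid : Move → State → Prop
  | .t1 d, Φ => d + 1 < Φ.length
  | .t2 i, Φ => i < numPos Φ ∧ DominantAt Φ i
  | .t3 i j, Φ =>
      i < numPos Φ ∧ j < numPos Φ ∧ i ≠ j ∧ SameTuple Φ i j ∧ DominantAt Φ i ∧ entry Φ j ≤ 0
  | .t4 i j, Φ =>
      i < numPos Φ ∧ j < numPos Φ ∧ i ≠ j ∧ SameTuple Φ i j ∧ DominantAt Φ i ∧ 0 < entry Φ j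
  | .t5 i j, Φ =>
      i < numPos Φ ∧ j < numPos Φ ∧ i ≠ j ∧ SameTuple Φ i j ∧ DominantAt Φ i ∧ entry Φ j < 0
  | .t6 i j, Φ =>
      i < numPos Φ ∧ j < numPos Φ ∧ i ≠ j ∧ SameTuple Φ i j ∧ DominantAt Φ i ∧ 0 ≤ entry Φ j

def Move.isType1 : Move → Prop
  | .t1 _ => True
  | _ => False

def Move.isType2 : Move → Prop
  | .t2 _ => True
  | _ => False

def Move.isType3 : Move → Prop
  | .t3 _ _ => True
  | _ => False

/-- The move is of one of the types 1, 2 or 3. -/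
def Move.isType123 : Move → Prop
  | .t1 _ => True
  | .t2 _ => True
  | .t3 _ _ => True
  | _ => False

/-- `ValidSeq ms Φ Ψ`: the list of moves `ms`, applied in order starting from `Φ`,
consists of valid moves and ends at `Ψ`. -/
def ValidSeq : List Move → State → State → Prop
  | [], Φ, Ψ => Φ = Ψ
  | m :: ms, Φ, Ψ => m.Valid Φ ∧ ValidSeq ms (m.apply Φ) Ψ

/-- A tuple of integers is C*_{Z,6}-realizable: the one-tuple state `[l]` is reachable
from `((0),...,(0))` by a finite sequence of valid moves of types 1–6. -/
def CStarZ6 (l : List ℤ) : Prop :=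
  ∃ ms : List Move, ValidSeq ms (List.replicate l.length ([0] : List ℤ)) [l]

/-- A tuple of integers is C*_{Z,3}-realizable: the one-tuple state `[l]` is reachable
from `((0),...,(0))` by a finite sequence of valid moves of types 1, 2 and 3. -/
def CStarZ3 (l : List ℤ) : Prop :=
  ∃ ms : List Move, (∀ m ∈ ms, m.isType123) ∧
    ValidSeq ms (List.replicate l.length ([0] : List ℤ)) [l]



/-! ### Auxiliary lemmas -/

private theorem getD_set' (l : List ℤ) (i j : ℕ) (x : ℤ) :
    (l.set i x).getD j 0 = if i = j ∧ i < l.length then x else l.getD j 0 := by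
  rw [List.getD_eq_getElem?_getD, List.getD_eq_getElem?_getD, List.getElem?_set]
  split
  · subst j; split <;> rename_i h
    · rw [if_pos ⟨rfl, by simpa using h⟩]; simp
    · rw [if_neg (by simp at h; omega), List.getElem?_eq_none (le_of_not_gt h)]
  · rw [if_neg (by tauto)]

private theorem getD_append_left' (l₁ l₂ : List ℤ) (i : ℕ) (h : i < l₁.length) :
    (l₁ ++ l₂).getD i 0 = l₁.getD i 0 := by
  rw [List.getD_eq_getElem?_getD, List.getD_eq_getElem?_getD, List.getElem?_append, if_pos h]

private theorem getD_append_right' (l₁ l₂ : List ℤ) (i : ℕ) (h : l₁.length ≤ i) :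
    (l₁ ++ l₂).getD i 0 = l₂.getD (i - l₁.length) 0 := by
  rw [List.getD_eq_getElem?_getD, List.getD_eq_getElem?_getD, List.getElem?_append_right h]

theorem modifyFlat_map_length (f : ℤ → ℤ) :
    ∀ (i : ℕ) (Φ : State), (modifyFlat f i Φ).map List.length = Φ.map List.length
  | _, [] => rfl
  | i, t :: ts => by
    by_cases hit : i < t.length
    · simp only [modifyFlat, if_pos hit, List.map_cons, List.length_append, List.length_take,
        List.length_cons, List.length_drop]
      congr 1
      omega
    · simp only [modifyFlat, if_neg hit, List.map_cons, modifyFlat_map_length f (i - t.length) ts]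

theorem numPos_eq_sum (Φ : State) : numPos Φ = (Φ.map List.length).sum := by
  simp [numPos, entries]

theorem numPos_modifyFlat (f : ℤ → ℤ) (i : ℕ) (Φ : State) :
    numPos (modifyFlat f i Φ) = numPos Φ := by
  rw [numPos_eq_sum, numPos_eq_sum, modifyFlat_map_length]

theorem length_modifyFlat (f : ℤ → ℤ) (i : ℕ) (Φ : State) :
    (modifyFlat f i Φ).length = Φ.length := by
  have h := congrArg List.length (modifyFlat_map_length f i Φ)
  simpa using h

theorem tupleIdx_congr : ∀ {Φ Ψ : State}, Φ.map List.length = Ψ.map List.length →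
    ∀ i, tupleIdx Φ i = tupleIdx Ψ i
  | [], [], _, _ => rfl
  | t :: ts, s :: ss, h, i => by
    simp only [List.map_cons, List.cons.injEq] at h
    simp only [tupleIdx, h.1, tupleIdx_congr h.2]

theorem sameTuple_modifyFlat (f : ℤ → ℤ) (i a b : ℕ) (Φ : State) :
    SameTuple (modifyFlat f i Φ) a b ↔ SameTuple Φ a b := by
  unfold SameTuple
  rw [tupleIdx_congr (modifyFlat_map_length f i Φ),
      tupleIdx_congr (modifyFlat_map_length f i Φ)]

theorem entries_modifyFlat (f : ℤ → ℤ) :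
    ∀ (i : ℕ) (Φ : State), i < numPos Φ →
      entries (modifyFlat f i Φ) = (entries Φ).set i (f (entry Φ i))
  | i, [], h => by simp [numPos, entries] at h
  | i, t :: ts, h => by
    by_cases hit : i < t.length
    · simp only [modifyFlat, if_pos hit, entries, List.flatten_cons, entry]
      rw [List.set_append_left _ _ hit, getD_append_left' _ _ _ hit,
        List.set_eq_take_append_cons_drop, if_pos hit]
    · have hlen : i - t.length < numPos ts := by
        simp only [numPos, entries, List.flatten_cons, List.length_append] at h ⊢
        omega
      simp only [modifyFlat, if_neg hit, entries, List.flatten_cons, entry]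
      have ih := entries_modifyFlat f (i - t.length) ts hlen
      simp only [entries] at ih
      rw [ih]
      rw [List.set_append_right _ _ (le_of_not_gt hit),
        getD_append_right' _ _ _ (le_of_not_gt hit)]
      rfl

theorem entry_modifyFlat (f : ℤ → ℤ) (i m : ℕ) (Φ : State) (hi : i < numPos Φ) :
    entry (modifyFlat f i Φ) m = if i = m then f (entry Φ i) else entry Φ m := by
  unfold entry
  rw [entries_modifyFlat f i Φ hi, getD_set']
  have hlen : i < (entries Φ).length := hi
  by_cases h : i = m
  · rw [if_pos ⟨h, hlen⟩, if_pos h]; rfl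
  · rw [if_neg (fun hh => h hh.1), if_neg h]

/-- The key combinatorial step: if `i` is dominant, `k` is not dominant and `i ≠ k`,
then `i` remains dominant after adding `1` to the entry at `k`. -/
theorem dominant_bump {Φ : State} {i k : ℕ} (hik : i ≠ k) (hk : k < numPos Φ)
    (hdom : DominantAt Φ i) (hndk : ¬ DominantAt Φ k) :
    DominantAt (modifyFlat (· + 1) k Φ) i := by
  intro m hm hst
  rw [numPos_modifyFlat] at hm
  rw [sameTuple_modifyFlat] at hst
  have hki : ¬ (k = i) := fun h => hik h.symm
  rw [entry_modifyFlat _ _ _ _ hk, entry_modifyFlat _ _ _ _ hk, if_neg hki]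
  by_cases hkm : k = m
  · rw [if_pos hkm]
    subst m
    by_contra hcon
    push_neg at hcon
    have h1 : |entry Φ k| ≤ entry Φ i := hdom k hk hst
    have h2 : entry Φ k = entry Φ i := by
      rcases le_or_gt 0 (entry Φ k) with h0 | h0
      · rw [abs_of_nonneg h0] at h1
        rw [abs_of_nonneg (by omega)] at hcon
        omega
      · rw [abs_of_neg h0] at h1
        rcases le_or_gt 0 (entry Φ k + 1) with h0' | h0'
        · rw [abs_of_nonneg h0'] at hcon; omega
        · rw [abs_of_neg h0'] at hcon; omega
    apply hndk
    intro m' hm' hst'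
    have hstm : SameTuple Φ i m' := by
      simp only [SameTuple] at hst hst' ⊢; omega
    rw [h2]
    exact hdom m' hm' hstm
  · rw [if_neg hkm]
    exact hdom m hm hst

theorem dominant_incr_self {Φ : State} {i : ℕ} (hi : i < numPos Φ)
    (hdom : DominantAt Φ i) :
    DominantAt (modifyFlat (· + 1) i Φ) i := by
  intro m hm hst
  rw [numPos_modifyFlat] at hm
  rw [sameTuple_modifyFlat] at hst
  have h0 : 0 ≤ entry Φ i := le_trans (abs_nonneg _) (hdom i hi rfl)
  rw [entry_modifyFlat _ _ _ _ hi, entry_modifyFlat _ _ _ _ hi, if_pos rfl]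
  by_cases him : i = m
  · rw [if_pos him]
    subst m
    rw [abs_of_nonneg (by omega)]
  · rw [if_neg him]
    have := hdom m hm hst
    omega

/-- If a valid move `M` of type 1, 2 or 3 that is not of the form `T3^{ik}` is
followed by an invalid (admissible but not valid) type 2 move `T2^k`, then after
the swap it is not possible that both moves are invalid. -/
theorem M_valid_T2_invalid_swap (Φ : State) (hΦ : IsState Φ) (M : Move)
    (hM : M.isType123) (k : ℕ) (hnot : ∀ i, M ≠ Move.t3 i k)
    (hval : M.Valid Φ)
    (hadm : (Move.t2 k).Admissible (M.apply Φ))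
    (hinv : ¬ (Move.t2 k).Valid (M.apply Φ)) :
    (Move.t2 k).Valid Φ ∨ M.Valid ((Move.t2 k).apply Φ) := by
  cases M with
  | t1 d =>
    right
    simp only [Move.Valid, Move.apply] at hval ⊢
    rw [length_modifyFlat]
    exact hval
  | t2 i =>
    obtain ⟨hi, hdom⟩ := hval
    simp only [Move.apply, Move.Admissible] at hadm
    rw [numPos_modifyFlat] at hadm
    simp only [Move.Valid, Move.apply] at hinv ⊢
    by_cases hik : i = k
    · subst k
      exact absurd ⟨by rwa [numPos_modifyFlat], dominant_incr_self hi hdom⟩ hinv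
    · by_cases hdk : DominantAt Φ k
      · exact Or.inl ⟨hadm, hdk⟩
      · exact Or.inr ⟨by rwa [numPos_modifyFlat], dominant_bump hik hadm hdom hdk⟩
  | t3 i j =>
    obtain ⟨hi, hj, hij, hst, hdom, hj0⟩ := hval
    have hjk : j ≠ k := fun h => hnot i (by rw [h])
    simp only [Move.apply, Move.Admissible] at hadm
    rw [numPos_modifyFlat, numPos_modifyFlat] at hadm
    simp only [Move.Valid, Move.apply] at hinv ⊢
    by_cases hik : i = k
    · subst k
      exact Or.inl ⟨hi, hdom⟩
    · by_cases hdk : DominantAt Φ k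
      · exact Or.inl ⟨hadm, hdk⟩
      · refine Or.inr ⟨by rwa [numPos_modifyFlat], by rwa [numPos_modifyFlat],
          hij, by rwa [sameTuple_modifyFlat], dominant_bump hik hadm hdom hdk, ?_⟩
        rw [entry_modifyFlat _ _ _ _ hadm, if_neg (fun h => hjk h.symm)]
        exact hj0
  | t4 i j => exact absurd hM (by simp [Move.isType123])
  | t5 i j => exact absurd hM (by simp [Move.isType123])
  | t6 i j => exact absurd hM (by simp [Move.isType123])


end CPaper
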